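/- Any rule update operator satisfying the strong-equivalence replacement postulate PU4 (if P ≡_HT Q and U ≡_HT V then P ⊕ U ≡_HT Q ⊕ V) cannot respect both support and fact update. Concretely: with P = {p., q.}, Q = {p ← q., q.}, and U = {∼q.}, P and Q are strongly equivalent (have the same HT-models), so by PU4 the programs P ⊕ U and Q ⊕ U have the same stable models; if fact update holds then {p} is the unique stable model of P ⊕ U; but then {p} is a stable model of Q ⊕ U in which p is not supported by any rule of Q ∪ U, contradicting support. -/
import Mathlib


inductive Lit (α : Type) where
  | pos : α → Lit α
  | neg : α → Lit α

structure Rule (α : Type) where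
  head : Set (Lit α)
  body : Set (Lit α)

def litSat {α : Type} (J : Set α) : Lit α → Prop
  | .pos a => a ∈ J
  | .neg a => a ∉ J

def ruleSat {α : Type} (J : Set α) (π : Rule α) : Prop :=
  (∃ L ∈ π.body, ¬ litSat J L) ∨ (∃ L ∈ π.head, litSat J L)

def progSat {α : Type} (J : Set α) (P : Set (Rule α)) : Prop :=
  ∀ π ∈ P, ruleSat J π

/-- A rule is kept in the reduct w.r.t. `J` iff `J` does not satisfy the rule `(∼H⁻, ∼B⁻)`. -/
def kept {α : Type} (J : Set α) (π : Rule α) : Prop :=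
  (∀ a : α, Lit.neg a ∈ π.body → a ∉ J) ∧ (∀ a : α, Lit.neg a ∈ π.head → a ∈ J)

/-- The positive-part rule `(H⁺, B⁺)`. -/
def reductRule {α : Type} (π : Rule α) : Rule α :=
  ⟨{L ∈ π.head | ∃ a, L = Lit.pos a}, {L ∈ π.body | ∃ a, L = Lit.pos a}⟩

def reduct {α : Type} (J : Set α) (P : Set (Rule α)) : Set (Rule α) :=
  {ρ | ∃ π ∈ P, kept J π ∧ ρ = reductRule π}

/-- `J` is a stable model of `P`: a subset-minimal classical model of the reduct `P^J`. -/
def stableModel {α : Type} (P : Set (Rule α)) (J : Set α) : Prop :=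
  progSat J (reduct J P) ∧ ∀ I : Set α, progSat I (reduct J P) → ¬ I ⊂ J

/-- `⟨I, J⟩` is an RE-model of rule `π` iff `I ⊨ π^J`. -/
def reRule {α : Type} (π : Rule α) (I J : Set α) : Prop :=
  kept J π → ruleSat I (reductRule π)

/-- `⟨I, J⟩` is an HT-model of rule `π` iff `J ⊨ π` and `I ⊨ π^J`. -/
def htRule {α : Type} (π : Rule α) (I J : Set α) : Prop :=
  ruleSat J π ∧ reRule π I J

def htProg {α : Type} (P : Set (Rule α)) (I J : Set α) : Prop :=
  ∀ π ∈ P, htRule π I J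

def reProg {α : Type} (P : Set (Rule α)) (I J : Set α) : Prop :=
  ∀ π ∈ P, reRule π I J

def negLit {α : Type} : Lit α → Lit α
  | .pos a => .neg a
  | .neg a => .pos a

/-- Rules `π`, `σ` are in conflict iff `head π ≠ ∅` and `head π = ∼ head σ`. -/
def conflict {α : Type} (π σ : Rule α) : Prop :=
  π.head ≠ ∅ ∧ π.head = negLit '' σ.head

def bodySat {α : Type} (J : Set α) (σ : Rule α) : Prop :=
  ∀ L ∈ σ.body, litSat J L

/-- Strong equivalence: same HT-models. -/
def htEquiv {α : Type} (P Q : Set (Rule α)) : Prop :=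
  ∀ I J : Set α, I ⊆ J → (htProg P I J ↔ htProg Q I J)

def fact {α : Type} (L : Lit α) : Rule α := ⟨{L}, ∅⟩

def isFactProg {α : Type} (F : Set (Rule α)) : Prop :=
  ∀ π ∈ F, ∃ L : Lit α, π = fact L

def consistentFacts {α : Type} (F : Set (Rule α)) : Prop :=
  ¬ ∃ a : α, fact (Lit.pos a) ∈ F ∧ fact (Lit.neg a) ∈ F

/-- PU4: replacement of strongly equivalent programs. -/
def satisfiesPU4 {α : Type} (op : Set (Rule α) → Set (Rule α) → Set (Rule α)) : Prop :=
  ∀ P Q U V : Set (Rule α), htEquiv P Q → htEquiv U V → htEquiv (op P U) (op Q V)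

/-- Support: every atom true in a stable model of the updated program is the head of some
rule of the combined program whose body is true in that model. -/
def respectsSupport {α : Type} (op : Set (Rule α) → Set (Rule α) → Set (Rule α)) : Prop :=
  ∀ (P U : Set (Rule α)) (J : Set α), stableModel (op P U) J →
    ∀ a ∈ J, ∃ π ∈ P ∪ U, Lit.pos a ∈ π.head ∧ bodySat J π

/-- Fact update: updating a consistent set of facts by a consistent set of facts yields the
unique model consisting of the atoms asserted at some stage and not subsequently contradicted. -/
def respectsFactUpdate {α : Type} (op : Set (Rule α) → Set (Rule α) → Set (Rule α)) : Prop :=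
  ∀ F₀ F₁ : Set (Rule α), isFactProg F₀ → isFactProg F₁ →
    consistentFacts F₀ → consistentFacts F₁ →
    ∀ J : Set α, stableModel (op F₀ F₁) J ↔
      J = {a | fact (Lit.pos a) ∈ F₁ ∨
            (fact (Lit.pos a) ∈ F₀ ∧ fact (Lit.neg a) ∉ F₁)}

section Aux
variable {α : Type}

lemma ruleSat_of_not_kept {J : Set α} {π : Rule α} (h : ¬ kept J π) : ruleSat J π := by
  rw [kept, not_and_or] at h
  push_neg at h
  rcases h with ⟨a, hab, haJ⟩ | ⟨a, hah, haJ⟩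
  · exact Or.inl ⟨Lit.neg a, hab, by simp [litSat, haJ]⟩
  · exact Or.inr ⟨Lit.neg a, hah, haJ⟩

lemma ruleSat_reduct_iff {J : Set α} {π : Rule α} (h : kept J π) :
    ruleSat J (reductRule π) ↔ ruleSat J π := by
  constructor
  · rintro (⟨L, ⟨hL, _⟩, hs⟩ | ⟨L, ⟨hL, _⟩, hs⟩)
    · exact Or.inl ⟨L, hL, hs⟩
    · exact Or.inr ⟨L, hL, hs⟩
  · rintro (⟨L, hL, hs⟩ | ⟨L, hL, hs⟩)
    · cases L with
      | pos a => exact Or.inl ⟨_, ⟨hL, a, rfl⟩, hs⟩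
      | neg a => exact absurd (h.1 a hL) (by simpa [litSat] using hs)
    · cases L with
      | pos a => exact Or.inr ⟨_, ⟨hL, a, rfl⟩, hs⟩
      | neg a => exact absurd (h.2 a hL) hs

lemma progSat_reduct_iff {I J : Set α} {P : Set (Rule α)} :
    progSat I (reduct J P) ↔ reProg P I J := by
  constructor
  · intro h π hπ hk
    exact h _ ⟨π, hπ, hk, rfl⟩
  · rintro h ρ ⟨π, hπ, hk, rfl⟩
    exact h π hπ hk

lemma ruleSat_of_reRule {J : Set α} {π : Rule α} (h : reRule π J J) : ruleSat J π := by
  by_cases hk : kept J π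
  · exact (ruleSat_reduct_iff hk).mp (h hk)
  · exact ruleSat_of_not_kept hk

lemma htProg_self_iff {J : Set α} {P : Set (Rule α)} :
    htProg P J J ↔ progSat J (reduct J P) := by
  rw [progSat_reduct_iff]
  constructor
  · exact fun h π hπ => (h π hπ).2
  · exact fun h π hπ => ⟨ruleSat_of_reRule (h π hπ), h π hπ⟩

lemma htProg_iff_of {I J : Set α} {P : Set (Rule α)} (hJ : progSat J (reduct J P)) :
    htProg P I J ↔ progSat I (reduct J P) := by
  rw [progSat_reduct_iff]
  constructor
  · exact fun h π hπ => (h π hπ).2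
  · exact fun h π hπ =>
      ⟨ruleSat_of_reRule ((progSat_reduct_iff.mp hJ) π hπ), h π hπ⟩

lemma stable_congr {P Q : Set (Rule α)} (h : htEquiv P Q) {J : Set α}
    (hs : stableModel P J) : stableModel Q J := by
  obtain ⟨h1, h2⟩ := hs
  have hJQ : progSat J (reduct J Q) := by
    rw [← htProg_self_iff] at h1 ⊢
    exact (h J J subset_rfl).mp h1
  refine ⟨hJQ, fun I hI hIJ => ?_⟩
  have : htProg Q I J := (htProg_iff_of hJQ).mpr hI
  have : htProg P I J := (h I J hIJ.subset).mpr this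
  exact h2 I ((htProg_iff_of h1).mp this) hIJ

end Aux
section Concrete
variable {α : Type}

lemma htRule_fact_pos {a : α} {I J : Set α} :
    htRule (fact (Lit.pos a)) I J ↔ (a ∈ J ∧ a ∈ I) := by
  simp [htRule, ruleSat, reRule, kept, reductRule, fact, litSat, and_assoc]

lemma htRule_rule {a b : α} {I J : Set α} :
    htRule (⟨{Lit.pos a}, {Lit.pos b}⟩ : Rule α) I J ↔
      ((b ∉ J ∨ a ∈ J) ∧ (b ∉ I ∨ a ∈ I)) := by
  simp [htRule, ruleSat, reRule, kept, reductRule, litSat, and_assoc]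

end Concrete
/-- Any rule update operator satisfying PU4 cannot respect both support and fact update
(witnessed by `P = {p., q.}`, `Q = {p ← q., q.}`, `U = {∼q.}`). -/
theorem stmt10 {α : Type} (p q : α) (hpq : p ≠ q)
    (op : Set (Rule α) → Set (Rule α) → Set (Rule α))
    (hPU4 : satisfiesPU4 op) :
    ¬ (respectsSupport op ∧ respectsFactUpdate op) := by
  rintro ⟨hsup, hfu⟩
  set P : Set (Rule α) := {fact (Lit.pos p), fact (Lit.pos q)} with hP
  set Q : Set (Rule α) := {⟨{Lit.pos p}, {Lit.pos q}⟩, fact (Lit.pos q)} with hQ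
  set U : Set (Rule α) := {fact (Lit.neg q)} with hU
  have hPQ : htEquiv P Q := by
    intro I J hIJ
    have h1 : htProg P I J ↔ (p ∈ I ∧ q ∈ I) := by
      simp only [hP, htProg, Set.mem_insert_iff, Set.mem_singleton_iff, forall_eq_or_imp,
        forall_eq, htRule_fact_pos]
      constructor
      · rintro ⟨⟨_, h1⟩, _, h2⟩; exact ⟨h1, h2⟩
      · rintro ⟨h1, h2⟩; exact ⟨⟨hIJ h1, h1⟩, hIJ h2, h2⟩
    have h2 : htProg Q I J ↔ (p ∈ I ∧ q ∈ I) := by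
      simp only [hQ, htProg, Set.mem_insert_iff, Set.mem_singleton_iff, forall_eq_or_imp,
        forall_eq, htRule_fact_pos, htRule_rule]
      constructor
      · rintro ⟨⟨_, hI⟩, _, hqI⟩
        rcases hI with h | h
        · exact absurd hqI h
        · exact ⟨h, hqI⟩
      · rintro ⟨h1, h2⟩
        exact ⟨⟨Or.inr (hIJ h1), Or.inr h1⟩, hIJ h2, h2⟩
    rw [h1, h2]
  have hfP : isFactProg P := by
    rintro π (rfl | rfl) <;> exact ⟨_, rfl⟩
  have hfU : isFactProg U := by
    rintro π rfl; exact ⟨_, rfl⟩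
  have hcP : consistentFacts P := by
    rintro ⟨a, _, ha2⟩
    simp [hP, fact, Rule.mk.injEq, Set.singleton_eq_singleton_iff] at ha2
  have hcU : consistentFacts U := by
    rintro ⟨a, ha1, _⟩
    simp [hU, fact, Rule.mk.injEq, Set.singleton_eq_singleton_iff] at ha1
  have hstab : stableModel (op P U) {p} := by
    rw [hfu P U hfP hfU hcP hcU]
    ext a
    simp only [hP, hU, Set.mem_singleton_iff, Set.mem_setOf_eq, Set.mem_insert_iff,
      fact, Rule.mk.injEq, Set.singleton_eq_singleton_iff, Lit.pos.injEq, Lit.neg.injEq]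
    by_cases h1 : a = p <;> by_cases h2 : a = q <;> simp_all
  have hQstab : stableModel (op Q U) {p} :=
    stable_congr (hPU4 P Q U U hPQ (fun I J _ => Iff.rfl)) hstab
  obtain ⟨π, hπ, hhead, hbody⟩ := hsup Q U {p} hQstab p rfl
  rcases hπ with (rfl | rfl) | rfl
  · have := hbody (Lit.pos q) rfl
    exact hpq (this.symm)
  · simp only [fact, Set.mem_singleton_iff] at hhead
    exact hpq (Lit.pos.inj hhead)
  · simp only [fact, Set.mem_singleton_iff] at hhead
    cases hhead
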